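/- Let B be a unital complex Banach algebra, A a unital C*-algebra with a faithful tracial state τ, and T : B → A a surjective unital linear mapping which preserves invertible elements. Then τ(T(a b) − T(a) T(b)) = 0 for all a, b ∈ B; equivalently, τ(T(a b)) = τ(T(a) T(b)). -/

import Mathlib

open scoped ComplexOrder NNReal ENNReal

section Aux

variable {A : Type*} [CStarAlgebra A] [PartialOrder A] [StarOrderedRing A]

private lemma tau_nonneg (τ : A →ₗ[ℂ] ℂ) (hτpos : ∀ a : A, 0 ≤ τ (star a * a))
    (p : A) (hp : 0 ≤ p) : 0 ≤ τ p := by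
  have h1 : CFC.sqrt p * CFC.sqrt p = p := CFC.sqrt_mul_sqrt_self p hp
  have h2 : star (CFC.sqrt p) = CFC.sqrt p :=
    (IsSelfAdjoint.of_nonneg (CFC.sqrt_nonneg (a := p))).star_eq
  have h3 : star (CFC.sqrt p) * CFC.sqrt p = p := by rw [h2, h1]
  rw [← h3]
  exact hτpos _

private lemma tau_real (τ : A →ₗ[ℂ] ℂ) (hτpos : ∀ a : A, 0 ≤ τ (star a * a))
    (h : A) (hsa : IsSelfAdjoint h) : (τ h).im = 0 := by
  have hdec : h⁺ - h⁻ = h := CFC.posPart_sub_negPart h hsa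
  have h1 : 0 ≤ τ h⁺ := tau_nonneg τ hτpos _ (CFC.posPart_nonneg h)
  have h2 : 0 ≤ τ h⁻ := tau_nonneg τ hτpos _ (CFC.negPart_nonneg h)
  have i1 : (τ h⁺).im = 0 := ((Complex.nonneg_iff.mp h1).2).symm
  have i2 : (τ h⁻).im = 0 := ((Complex.nonneg_iff.mp h2).2).symm
  calc (τ h).im = (τ (h⁺ - h⁻)).im := by rw [hdec]
    _ = (τ h⁺ - τ h⁻).im := by rw [map_sub]
    _ = (τ h⁺).im - (τ h⁻).im := by simp [Complex.sub_im]
    _ = 0 := by rw [i1, i2, sub_zero]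

private lemma tau_star (τ : A →ₗ[ℂ] ℂ) (hτpos : ∀ a : A, 0 ≤ τ (star a * a))
    (z : A) : τ (star z) = starRingEnd ℂ (τ z) := by
  set h : A := z + star z with hh
  set g : A := Complex.I • z - Complex.I • star z with hg
  have hsa : IsSelfAdjoint h := by
    simp only [IsSelfAdjoint, hh, star_add, star_star]; abel
  have gsa : IsSelfAdjoint g := by
    simp only [IsSelfAdjoint, hg, star_sub, star_smul, star_star, Complex.star_def,
      Complex.conj_I, neg_smul]
    abel
  have hre : (τ h).im = 0 := tau_real τ hτpos h hsa
  have gre : (τ g).im = 0 := tau_real τ hτpos g gsa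
  have hzdec : (2:ℂ) • z = h - Complex.I • g := by
    simp only [hh, hg, smul_sub, smul_smul, Complex.I_mul_I, neg_smul, one_smul, sub_neg_eq_add]
    rw [two_smul]
    abel
  have hszdec : (2:ℂ) • star z = h + Complex.I • g := by
    simp only [hh, hg, smul_sub, smul_smul, Complex.I_mul_I, neg_smul, one_smul, sub_neg_eq_add]
    rw [two_smul]
    abel
  have e1 : (2:ℂ) * τ z = τ h - Complex.I * τ g := by
    have := congrArg τ hzdec
    simpa [map_sub, map_smul, smul_eq_mul] using this
  have e2 : (2:ℂ) * τ (star z) = τ h + Complex.I * τ g := by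
    have := congrArg τ hszdec
    simpa [map_add, map_smul, smul_eq_mul] using this
  have hconjh : starRingEnd ℂ (τ h) = τ h := Complex.conj_eq_iff_im.mpr hre
  have hconjg : starRingEnd ℂ (τ g) = τ g := Complex.conj_eq_iff_im.mpr gre
  have : (2:ℂ) * starRingEnd ℂ (τ z) = (2:ℂ) * τ (star z) := by
    calc (2:ℂ) * starRingEnd ℂ (τ z) = starRingEnd ℂ ((2:ℂ) * τ z) := by
          rw [map_mul, map_ofNat]
      _ = starRingEnd ℂ (τ h - Complex.I * τ g) := by rw [e1]
      _ = τ h + Complex.I * τ g := by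
          rw [map_sub, map_mul, Complex.conj_I, hconjh, hconjg]; ring
      _ = (2:ℂ) * τ (star z) := e2.symm
  exact (mul_left_cancel₀ two_ne_zero this).symm

private lemma tau_bdd (τ : A →ₗ[ℂ] ℂ) (hτ1 : τ 1 = 1)
    (hτpos : ∀ a : A, 0 ≤ τ (star a * a)) (z : A) : ‖τ z‖ ≤ ‖z‖ := by
  set t : ℂ := τ z with ht
  -- Cauchy-Schwarz step
  have hw := hτpos (z - t • 1)
  have hexp : star (z - t • 1) * (z - t • 1)
      = star z * z - t • star z - (starRingEnd ℂ t) • z + (t * starRingEnd ℂ t) • (1:A) := by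
    simp only [star_sub, star_smul, star_one, Complex.star_def, sub_mul, mul_sub, smul_sub,
      smul_mul_assoc, mul_smul_comm, mul_one, one_mul, smul_smul]
    abel
  have htau : τ (star (z - t • 1) * (z - t • 1)) = τ (star z * z) - t * starRingEnd ℂ t := by
    rw [hexp]
    have hstar : τ (star z) = starRingEnd ℂ t := by rw [tau_star τ hτpos z, ht]
    simp only [map_add, map_sub, map_smul, smul_eq_mul, hτ1, mul_one, hstar]
    ring
  rw [htau] at hw
  have h1 : Complex.normSq t ≤ (τ (star z * z)).re := by
    have := (Complex.nonneg_iff.mp hw).1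
    rw [Complex.sub_re] at this
    have ht2 : (t * starRingEnd ℂ t) = (Complex.normSq t : ℂ) := Complex.mul_conj t
    rw [ht2] at this
    simpa using this
  -- upper bound on τ (star z * z)
  have hsa : IsSelfAdjoint (star z * z) := IsSelfAdjoint.star_mul_self z
  have hle : star z * z ≤ algebraMap ℝ A ‖star z * z‖ :=
    IsSelfAdjoint.le_algebraMap_norm_self hsa
  have h0 : 0 ≤ τ (algebraMap ℝ A ‖star z * z‖ - star z * z) :=
    tau_nonneg τ hτpos _ (sub_nonneg.mpr hle)
  have halg : τ (algebraMap ℝ A ‖star z * z‖) = (‖star z * z‖ : ℂ) := by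
    rw [IsScalarTower.algebraMap_apply ℝ ℂ A, Algebra.algebraMap_eq_smul_one, map_smul,
      hτ1, smul_eq_mul, mul_one]
    norm_num
  have h2 : (τ (star z * z)).re ≤ ‖star z * z‖ := by
    have := (Complex.nonneg_iff.mp h0).1
    rw [map_sub, halg] at this
    simp only [Complex.sub_re, Complex.ofReal_re] at this
    linarith
  have h3 : Complex.normSq t ≤ ‖z‖ * ‖z‖ := by
    have : ‖star z * z‖ = ‖z‖ * ‖z‖ := CStarRing.norm_star_mul_self
    linarith [h1, h2, this.le, this.ge]
  calc ‖t‖ = Real.sqrt (Complex.normSq t) := Complex.norm_def t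
    _ ≤ Real.sqrt (‖z‖ * ‖z‖) := Real.sqrt_le_sqrt h3
    _ = ‖z‖ := Real.sqrt_mul_self (norm_nonneg z)

private lemma summable_pow_sq (y : A) (hy : spectralRadius ℂ y < 1) :
    Summable (fun n : ℕ => star (y ^ n) * y ^ n) := by
  obtain ⟨ρ, hρy, hρ1⟩ := exists_between hy
  have hρtop : ρ ≠ ⊤ := (hρ1.trans ENNReal.one_lt_top).ne
  set ρ' : ℝ≥0 := ρ.toNNReal with hρ'def
  have hcoe : (ρ' : ℝ≥0∞) = ρ := ENNReal.coe_toNNReal hρtop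
  have hρ'1 : (ρ' : ℝ) < 1 := by
    have : (ρ' : ℝ≥0∞) < 1 := hcoe ▸ hρ1
    exact_mod_cast this
  have hρ'0 : (0:ℝ) ≤ (ρ' : ℝ) := ρ'.2
  have hev := (spectrum.pow_nnnorm_pow_one_div_tendsto_nhds_spectralRadius y).eventually_lt_const hρy
  obtain ⟨N, hN⟩ := Filter.eventually_atTop.mp hev
  have hbound : ∀ n, max N 1 ≤ n → ‖y ^ n‖ ≤ (ρ' : ℝ) ^ n := by
    intro n hn
    have h1 := hN n (le_trans (le_max_left _ _) hn)
    have hn1 : 1 ≤ n := le_trans (le_max_right _ _) hn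
    have hn0 : (n:ℝ) ≠ 0 := by positivity
    have h2 : ((‖y ^ n‖₊ : ℝ≥0∞) ^ (1/(n:ℝ))) ^ (n:ℝ) ≤ ρ ^ (n:ℝ) :=
      ENNReal.rpow_le_rpow h1.le (by positivity)
    rw [← ENNReal.rpow_mul, one_div, inv_mul_cancel₀ hn0, ENNReal.rpow_one] at h2
    rw [← hcoe, ← ENNReal.coe_rpow_of_nonneg _ (by positivity)] at h2
    have h3 : ‖y ^ n‖₊ ≤ ρ' ^ (n:ℝ) := ENNReal.coe_le_coe.mp h2
    calc ‖y ^ n‖ = ((‖y ^ n‖₊ : ℝ≥0) : ℝ) := rfl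
      _ ≤ ((ρ' ^ (n:ℝ) : ℝ≥0) : ℝ) := by exact_mod_cast h3
      _ = (ρ' : ℝ) ^ (n:ℝ) := by rw [NNReal.coe_rpow]
      _ = (ρ' : ℝ) ^ n := by rw [Real.rpow_natCast]
  have hgeom : Summable (fun n : ℕ => ((ρ' : ℝ) ^ 2) ^ n) :=
    summable_geometric_of_lt_one (by positivity)
      (by nlinarith)
  apply Summable.of_norm_bounded_eventually (g := fun n : ℕ => ((ρ' : ℝ) ^ 2) ^ n) hgeom
  rw [Nat.cofinite_eq_atTop, Filter.eventually_atTop]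
  refine ⟨max N 1, fun n hn => ?_⟩
  have hb := hbound n hn
  have hnn : (0:ℝ) ≤ ‖y ^ n‖ := norm_nonneg _
  calc ‖star (y ^ n) * y ^ n‖ = ‖y ^ n‖ * ‖y ^ n‖ := CStarRing.norm_star_mul_self
    _ ≤ (ρ' : ℝ) ^ n * ((ρ' : ℝ) ^ n) := by nlinarith
    _ = ((ρ' : ℝ) ^ 2) ^ n := by ring

private lemma abs_tau_le_one (τ : A →ₗ[ℂ] ℂ) (hτ1 : τ 1 = 1)
    (hτtrace : ∀ a b : A, τ (a * b) = τ (b * a))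
    (hτpos : ∀ a : A, 0 ≤ τ (star a * a))
    (y : A) (hy : spectralRadius ℂ y < 1) : ‖τ y‖ ≤ 1 := by
  set g : ℕ → A := fun n => star (y ^ n) * y ^ n with hgdef
  have hsum : Summable g := summable_pow_sq y hy
  set s2 : A := ∑' n, g n with hs2def
  have hg0 : g 0 = 1 := by simp [hgdef]
  have hzeroadd : s2 = 1 + ∑' n, g (n + 1) := by
    rw [hs2def, Summable.tsum_eq_zero_add hsum, hg0]
  have hptsum : s2 - 1 = ∑' n, g (n + 1) := eq_sub_of_add_eq' hzeroadd.symm |>.symm ▸ rfl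
  have hptsum' : s2 - 1 = ∑' n, g (n + 1) := by rw [hzeroadd]; abel
  have hp : 0 ≤ s2 - 1 := by
    rw [hptsum']
    exact tsum_nonneg (fun n => star_mul_self_nonneg _)
  have h0s2 : 0 ≤ s2 := by
    have h01 : (0:A) ≤ 1 := by simpa using star_mul_self_nonneg (1:A)
    calc (0:A) ≤ 1 := h01
      _ ≤ s2 := sub_nonneg.mp hp
  -- key identity
  have hterm : ∀ n : ℕ, star y * (g n * y) = g (n + 1) := by
    intro n
    simp only [hgdef]
    rw [pow_succ, star_mul]
    simp only [mul_assoc]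
  have hkey : star y * s2 * y = s2 - 1 := by
    have e1 : s2 * y = ∑' n, g n * y := (hsum.tsum_mul_right y).symm
    have e2 : star y * (∑' n, g n * y) = ∑' n, star y * (g n * y) :=
      ((hsum.mul_right y).tsum_mul_left (star y)).symm
    calc star y * s2 * y = star y * (s2 * y) := by rw [mul_assoc]
      _ = ∑' n, star y * (g n * y) := by rw [e1, e2]
      _ = ∑' n, g (n + 1) := by simp only [hterm]
      _ = s2 - 1 := hptsum'.symm
  -- s2 is a unit
  have hm1 : (-1:ℝ) ∉ spectrum ℝ (s2 - 1) := by
    intro hmem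
    have := spectrum_nonneg_of_nonneg hp hmem
    linarith
  have hunit' : IsUnit (algebraMap ℝ A (-1) - (s2 - 1)) := spectrum.notMem_iff.mp hm1
  have hs2unit : IsUnit s2 := by
    have heq : algebraMap ℝ A (-1) - (s2 - 1) = -s2 := by
      rw [map_neg, map_one]; abel
    rw [heq] at hunit'
    simpa using hunit'.neg
  -- square root
  set s : A := CFC.sqrt s2 with hsdef
  have hs0 : 0 ≤ s := CFC.sqrt_nonneg s2
  have hssa : IsSelfAdjoint s := IsSelfAdjoint.of_nonneg hs0
  have hss : s * s = s2 := CFC.sqrt_mul_sqrt_self s2 h0s2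
  obtain ⟨v, hv⟩ := hs2unit
  have hcomm : Commute s (v : A) := by
    rw [hv, ← hss]
    exact (Commute.refl s).mul_right (Commute.refl s)
  have hcomm' : Commute s ((v⁻¹ : Aˣ) : A) := hcomm.units_inv_right
  have hvinv_mul : ((v⁻¹ : Aˣ) : A) * s2 = 1 := by rw [← hv]; exact v.inv_mul
  have hmul_vinv : s2 * ((v⁻¹ : Aˣ) : A) = 1 := by rw [← hv]; exact v.mul_inv
  set si : A := ((v⁻¹ : Aˣ) : A) * s with hsidef
  have hsi_mul : si * s = 1 := by
    rw [hsidef, mul_assoc, hss, hvinv_mul]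
  have hmul_si : s * si = 1 := by
    rw [hsidef, ← mul_assoc, hcomm'.eq, mul_assoc, hss, hvinv_mul]
  have hsi_sa : star si = si := by
    have h1 : star si * s = 1 := by
      have := congrArg star hmul_si
      rwa [star_mul, star_one, hssa.star_eq] at this
    calc star si = star si * (s * si) := by rw [hmul_si, mul_one]
      _ = (star si * s) * si := by rw [mul_assoc]
      _ = si := by rw [h1, one_mul]
  set q : A := si * si with hqdef
  have hq0 : 0 ≤ q := by
    have h' := star_mul_self_nonneg si
    rwa [hsi_sa, ← hqdef] at h'
  have hsis2si : si * s2 * si = 1 := by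
    rw [← hss]
    calc si * (s * s) * si = (si * s) * (s * si) := by simp only [mul_assoc]
      _ = 1 := by rw [hsi_mul, hmul_si, one_mul]
  have h1q : (1:A) - q = si * (s2 - 1) * si := by
    rw [mul_sub, sub_mul, hsis2si, mul_one, hqdef]
  have h1q0 : 0 ≤ (1:A) - q := by
    have h' := star_left_conjugate_nonneg hp si
    rwa [hsi_sa, ← h1q] at h'
  -- the contraction M
  set M : A := s * y * si with hMdef
  have hMsq : star M * M = (1:A) - q := by
    have hstarM : star M = si * (star y * s) := by
      rw [hMdef, star_mul (s * y) si, star_mul s y, hsi_sa, hssa.star_eq]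
    calc star M * M = (si * (star y * s)) * (s * y * si) := by rw [hstarM]
      _ = si * ((star y * s2 * y) * si) := by rw [← hss]; simp only [mul_assoc]
      _ = si * ((s2 - 1) * si) := by rw [hkey]
      _ = (1:A) - q := by rw [← mul_assoc, ← h1q]
  have hM1 : ‖M‖ ≤ 1 := by
    have h2 : ‖M‖ * ‖M‖ = ‖(1:A) - q‖ := by
      rw [← CStarRing.norm_star_mul_self, hMsq]
    have h3 : ‖(1:A) - q‖ ≤ 1 := by
      rw [CStarAlgebra.norm_le_one_iff_of_nonneg _ h1q0]
      simpa using sub_le_self (1:A) hq0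
    nlinarith [norm_nonneg M]
  -- trace identity
  have hyM : τ y = τ M := by
    have hy' : y = si * (M * s) := by
      rw [hMdef]
      calc y = (si * s) * y * (si * s) := by rw [hsi_mul, one_mul, mul_one]
        _ = si * ((s * y * si) * s) := by simp only [mul_assoc]
    calc τ y = τ (si * (M * s)) := by rw [← hy']
      _ = τ ((M * s) * si) := hτtrace _ _
      _ = τ (M * (s * si)) := by rw [mul_assoc]
      _ = τ M := by rw [hmul_si, mul_one]
  rw [hyM]
  calc ‖τ M‖ ≤ ‖M‖ := tau_bdd τ hτ1 hτpos M
    _ ≤ 1 := hM1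


variable {B : Type*} [NormedRing B] [NormedAlgebra ℂ B] [CompleteSpace B]

private lemma key_bound
    (τ : A →ₗ[ℂ] ℂ) (hτ1 : τ 1 = 1)
    (hτtrace : ∀ a b : A, τ (a * b) = τ (b * a))
    (hτpos : ∀ a : A, 0 ≤ τ (star a * a))
    (T : B →ₗ[ℂ] A)
    (hTinv : ∀ x : B, IsUnit x → IsUnit (T x)) :
    ∀ u : B, IsUnit u → ∀ w : B,
      ‖τ (Ring.inverse (T u) * T (u * w))‖ ≤ ‖w‖ * ‖(1:B)‖ := by
  intro u hu w
  have htu : IsUnit (T u) := hTinv u hu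
  have hri : IsUnit (Ring.inverse (T u)) := by
    obtain ⟨U, hU⟩ := htu
    rw [← hU, Ring.inverse_unit]
    exact Units.isUnit _
  have hspec : ∀ w' : B, spectrum ℂ (Ring.inverse (T u) * T (u * w')) ⊆ spectrum ℂ w' := by
    intro w' μ hμ
    by_contra hns
    have hunit : IsUnit (algebraMap ℂ B μ - w') := spectrum.notMem_iff.mp hns
    have h1 : IsUnit (u * (algebraMap ℂ B μ - w')) := hu.mul hunit
    have h2 : IsUnit (T (u * (algebraMap ℂ B μ - w'))) := hTinv _ h1
    have h3 : T (u * (algebraMap ℂ B μ - w')) = μ • T u - T (u * w') := by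
      have : u * (algebraMap ℂ B μ - w') = μ • u - u * w' := by
        rw [mul_sub, Algebra.algebraMap_eq_smul_one, mul_smul_comm, mul_one]
      rw [this, map_sub, map_smul]
    have h4 : algebraMap ℂ A μ - Ring.inverse (T u) * T (u * w')
        = Ring.inverse (T u) * (μ • T u - T (u * w')) := by
      rw [mul_sub, mul_smul_comm, Ring.inverse_mul_cancel _ htu,
        Algebra.algebraMap_eq_smul_one]
    have h5 : IsUnit (algebraMap ℂ A μ - Ring.inverse (T u) * T (u * w')) := by
      rw [h4, ← h3]
      exact hri.mul h2
    exact (spectrum.mem_iff.mp hμ) h5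
  refine le_of_forall_gt_imp_ge_of_dense (fun C hC => ?_)
  have hC0 : 0 < C := lt_of_le_of_lt (by positivity) hC
  have hCne : ((C:ℝ) : ℂ) ≠ 0 := by exact_mod_cast hC0.ne'
  set w' : B := ((C:ℝ):ℂ)⁻¹ • w with hw'def
  set y : A := Ring.inverse (T u) * T (u * w) with hydef
  set y' : A := Ring.inverse (T u) * T (u * w') with hy'def
  have hyy : y' = ((C:ℝ):ℂ)⁻¹ • y := by
    rw [hy'def, hydef, hw'def, mul_smul_comm, map_smul, mul_smul_comm]
  have hnw' : ‖w'‖ = C⁻¹ * ‖w‖ := by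
    rw [hw'def, norm_smul]
    simp [abs_of_pos hC0]
  have hrad : spectralRadius ℂ y' < 1 := by
    have hr0 : ‖w'‖ * ‖(1:B)‖ < 1 := by
      rw [hnw', mul_assoc, inv_mul_lt_one₀ hC0]
      exact hC
    refine lt_of_le_of_lt (iSup₂_le fun μ hμ => ?_) (ENNReal.ofReal_lt_one.mpr hr0)
    have hμ' : μ ∈ spectrum ℂ w' := hspec w' hμ
    have : ‖μ‖ ≤ ‖w'‖ * ‖(1:B)‖ := spectrum.norm_le_norm_mul_of_mem hμ'
    rw [← enorm_eq_nnnorm, ← ofReal_norm]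
    exact ENNReal.ofReal_le_ofReal this
  have h1 := abs_tau_le_one τ hτ1 hτtrace hτpos y' hrad
  rw [hyy, map_smul, smul_eq_mul, norm_mul] at h1
  have habs : ‖(((C:ℝ):ℂ)⁻¹)‖ = C⁻¹ := by
    rw [norm_inv, Complex.norm_real, Real.norm_eq_abs, abs_of_pos hC0]
  rw [habs] at h1
  calc ‖τ y‖ = C * (C⁻¹ * ‖τ y‖) := by
        field_simp
    _ ≤ C * 1 := by
        apply mul_le_mul_of_nonneg_left h1 hC0.le
    _ = C := mul_one C

private lemma T_continuous
    (τ : A →ₗ[ℂ] ℂ) (hτ1 : τ 1 = 1)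
    (hτtrace : ∀ a b : A, τ (a * b) = τ (b * a))
    (hτpos : ∀ a : A, 0 ≤ τ (star a * a))
    (hτfaithful : ∀ a : A, τ (star a * a) = 0 → a = 0)
    (T : B →ₗ[ℂ] A)
    (hTsurj : Function.Surjective T)
    (hT1 : T 1 = 1)
    (hTinv : ∀ x : B, IsUnit x → IsUnit (T x)) :
    Continuous T := by
  have τbdd : ∀ z : A, ‖τ z‖ ≤ ‖z‖ := tau_bdd τ hτ1 hτpos
  have τcont : Continuous τ := by
    have h := (LinearMap.mkContinuous τ 1 (fun z => by
      rw [one_mul]; simpa using τbdd z)).continuous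
    exact h
  have key := key_bound τ hτ1 hτtrace hτpos T hTinv
  apply LinearMap.continuous_of_seq_closed_graph T
  intro seq x y hx hy
  set d : A := y - T x with hddef
  have hkey2 : ∀ v : B, IsUnit v → τ (Ring.inverse (T v) * d) = 0 := by
    intro v hv
    have htend : Filter.Tendsto (fun n => T (seq n) - T x) Filter.atTop (nhds d) := by
      simpa [hddef] using hy.sub_const (T x)
    have h1 : Filter.Tendsto (fun n => τ (Ring.inverse (T v) * (T (seq n) - T x)))
        Filter.atTop (nhds (τ (Ring.inverse (T v) * d))) := by
      exact (τcont.tendsto _).comp (((continuous_mul_left (Ring.inverse (T v))).tendsto d).comp htend)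
    have h2 : Filter.Tendsto (fun n => τ (Ring.inverse (T v) * (T (seq n) - T x)))
        Filter.atTop (nhds 0) := by
      have hbnd : ∀ n, ‖τ (Ring.inverse (T v) * (T (seq n) - T x))‖
          ≤ ‖((hv.unit⁻¹ : Bˣ) : B) * (seq n - x)‖ * ‖(1:B)‖ := by
        intro n
        have heq : T (seq n) - T x = T (v * (((hv.unit⁻¹ : Bˣ) : B) * (seq n - x))) := by
          rw [← mul_assoc]
          have hvv : v * ((hv.unit⁻¹ : Bˣ) : B) = 1 := by
            have := hv.unit.mul_inv
            simpa [IsUnit.unit_spec] using this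
          rw [hvv, one_mul, map_sub]
        rw [heq]
        exact key v hv _
      have hx0 : Filter.Tendsto (fun n => seq n - x) Filter.atTop (nhds 0) := by
        simpa using hx.sub_const x
      have hgt0 := (((continuous_mul_left ((hv.unit⁻¹ : Bˣ) : B)).tendsto 0).comp hx0).norm
      have hgt : Filter.Tendsto
          (fun n => ‖((hv.unit⁻¹ : Bˣ) : B) * (seq n - x)‖ * ‖(1:B)‖)
          Filter.atTop (nhds 0) := by
        simpa using hgt0.mul_const ‖(1:B)‖
      exact squeeze_zero_norm hbnd hgt
    exact tendsto_nhds_unique h1 h2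
  have hzd : ∀ z : A, τ (z * d) = 0 := by
    intro z
    obtain ⟨c, hc⟩ := hTsurj z
    have hd0 : τ d = 0 := by
      have := hkey2 1 isUnit_one
      simpa [hT1, Ring.inverse_one] using this
    have hsmall : ∀ t : ℂ, ‖t • c‖ < 1 → t ≠ 0 →
        τ (Ring.inverse ((1:A) + t • z) * (z * d)) = 0 := by
      intro t ht htne
      have hu : IsUnit ((1:B) + t • c) := by
        have h' : ‖-(t • c)‖ < 1 := by rwa [norm_neg]
        have hu' : IsUnit ((1:B) - -(t • c)) := (Units.oneSub (-(t • c)) h').isUnit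
        rwa [sub_neg_eq_add] at hu'
      have hTv : T ((1:B) + t • c) = (1:A) + t • z := by
        rw [map_add, map_smul, hT1, hc]
      have hA : IsUnit ((1:A) + t • z) := by
        rw [← hTv]; exact hTinv _ hu
      have h0 := hkey2 _ hu
      rw [hTv] at h0
      set R : A := Ring.inverse ((1:A) + t • z) with hRdef
      have hR1 : R * ((1:A) + t • z) = 1 := Ring.inverse_mul_cancel _ hA
      have hRexp : R = 1 - t • (R * z) := by
        have hone : R + t • (R * z) = 1 := by
          rw [← hR1, mul_add, mul_one, mul_smul_comm]
        linear_combination (norm := abel) hone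
      have hsplit : τ (R * d) = τ d - t * τ (R * (z * d)) := by
        conv_lhs => rw [hRexp]
        rw [sub_mul, one_mul, smul_mul_assoc, map_sub, map_smul, smul_eq_mul, mul_assoc]
      rw [h0, hd0] at hsplit
      have hsplit' := hsplit.symm
      rw [zero_sub, neg_eq_zero] at hsplit'
      exact (mul_eq_zero.mp hsplit').resolve_left htne
    set f : ℂ → ℂ := fun t => τ (Ring.inverse ((1:A) + t • z) * (z * d)) with hfdef
    have hmap : Continuous (fun t : ℂ => (1:A) + t • z) :=
      continuous_const.add (continuous_id.smul continuous_const)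
    have t1 : Filter.Tendsto (fun t : ℂ => (1:A) + t • z) (nhds 0) (nhds (1:A)) := by
      simpa using hmap.tendsto 0
    have hinv1 : ContinuousAt (Ring.inverse : A → A) (1:A) := by
      simpa using NormedRing.inverse_continuousAt (1 : Aˣ)
    have t2 : Filter.Tendsto (fun t : ℂ => Ring.inverse ((1:A) + t • z))
        (nhds 0) (nhds (Ring.inverse (1:A))) := hinv1.tendsto.comp t1
    have t3 : Filter.Tendsto (fun t : ℂ => Ring.inverse ((1:A) + t • z) * (z * d))
        (nhds 0) (nhds (Ring.inverse (1:A) * (z * d))) := t2.mul tendsto_const_nhds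
    have t4 : Filter.Tendsto f (nhds 0) (nhds (τ (Ring.inverse (1:A) * (z * d)))) :=
      (τcont.tendsto _).comp t3
    have h5 : Filter.Tendsto f (nhdsWithin (0:ℂ) {0}ᶜ)
        (nhds (τ (Ring.inverse (1:A) * (z * d)))) :=
      t4.mono_left nhdsWithin_le_nhds
    have hev : ∀ᶠ t in nhdsWithin (0:ℂ) {0}ᶜ, f t = 0 := by
      have hball : ∀ᶠ t in nhds (0:ℂ), ‖t • c‖ < 1 := by
        have hcn : Continuous (fun t : ℂ => ‖t • c‖) :=
          (continuous_id.smul continuous_const).norm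
        have h0 : ‖(0:ℂ) • c‖ < 1 := by simp
        exact (hcn.tendsto 0).eventually_lt_const h0
      have hne : ∀ᶠ t in nhdsWithin (0:ℂ) {0}ᶜ, t ≠ 0 := by
        filter_upwards [self_mem_nhdsWithin] with t ht
        exact ht
      refine ((hball.filter_mono nhdsWithin_le_nhds).and hne).mono ?_
      rintro t ⟨hlt, htmem⟩
      exact hsmall t hlt htmem
    have h6 : Filter.Tendsto f (nhdsWithin (0:ℂ) {0}ᶜ) (nhds 0) :=
      Filter.Tendsto.congr' (Filter.EventuallyEq.symm hev) tendsto_const_nhds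
    have hf00 : τ (Ring.inverse (1:A) * (z * d)) = 0 := tendsto_nhds_unique h5 h6
    rw [Ring.inverse_one, one_mul] at hf00
    exact hf00
  have hd : d = 0 := hτfaithful d (hzd (star d))
  have hd' : y - T x = 0 := hd
  exact (sub_eq_zero.mp hd').symm ▸ rfl

end Aux

/-- For a surjective unital invertibility-preserving linear map `T` into a unital
C*-algebra with faithful tracial state `τ`, one has `τ (T(ab)) = τ (T a · T b)`. -/
theorem trace_map_mul_eq_trace_mul_map
    {B A : Type*} [NormedRing B] [NormedAlgebra ℂ B] [CompleteSpace B]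
    [CStarAlgebra A]
    (τ : A →ₗ[ℂ] ℂ)
    (hτ1 : τ 1 = 1)
    (hτtrace : ∀ a b : A, τ (a * b) = τ (b * a))
    (hτpos : ∀ a : A, 0 ≤ τ (star a * a))
    (hτfaithful : ∀ a : A, τ (star a * a) = 0 → a = 0)
    (T : B →ₗ[ℂ] A)
    (hTsurj : Function.Surjective T)
    (hT1 : T 1 = 1)
    (hTinv : ∀ x : B, IsUnit x → IsUnit (T x)) :
    ∀ a b : B, τ (T (a * b) - T a * T b) = 0 := by
  letI : PartialOrder A := CStarAlgebra.spectralOrder A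
  haveI : StarOrderedRing A := CStarAlgebra.spectralOrderedRing A
  have τbdd : ∀ z : A, ‖τ z‖ ≤ ‖z‖ := tau_bdd τ hτ1 hτpos
  have key := key_bound τ hτ1 hτtrace hτpos T hTinv
  have hTcont : Continuous T :=
    T_continuous τ hτ1 hτtrace hτpos hτfaithful T hTsurj hT1 hTinv
  -- the continuous version of T
  set Tc : B →L[ℂ] A := ⟨T, hTcont⟩ with hTcdef
  have hTc : ∀ x : B, Tc x = T x := fun x => rfl
  intro a b
  set F : ℂ → ℂ := fun w =>
    τ (Ring.inverse (Tc (NormedSpace.exp (w • a))) * Tc (NormedSpace.exp (w • a) * b))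
    with hFdef
  have hdiff : Differentiable ℂ F := by
    intro w
    have he : DifferentiableAt ℂ (fun w : ℂ => NormedSpace.exp (w • a)) w :=
      (hasDerivAt_exp_smul_const' a w).differentiableAt
    have hg : DifferentiableAt ℂ (fun w : ℂ => Tc (NormedSpace.exp (w • a))) w :=
      Tc.differentiableAt.comp w he
    have hinv : DifferentiableAt ℂ
        (fun w : ℂ => Ring.inverse (Tc (NormedSpace.exp (w • a)))) w := by
      apply hg.inverse
      rw [hTc]
      exact hTinv _ (NormedSpace.isUnit_exp_of_mem_ball (𝕂 := ℂ) ((NormedSpace.expSeries_radius_eq_top ℂ B).symm ▸ edist_lt_top _ _))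
    have hh : DifferentiableAt ℂ (fun w : ℂ => Tc (NormedSpace.exp (w • a) * b)) w :=
      Tc.differentiableAt.comp w (he.mul_const b)
    have hcomb : DifferentiableAt ℂ (fun w : ℂ =>
        Ring.inverse (Tc (NormedSpace.exp (w • a))) * Tc (NormedSpace.exp (w • a) * b)) w :=
      hinv.mul hh
    exact ((LinearMap.mkContinuous τ 1 (fun z => by
      rw [one_mul]; simpa using τbdd z)).differentiableAt).comp w hcomb
  have hbdd : ∀ w : ℂ, ‖F w‖ ≤ ‖b‖ * ‖(1:B)‖ := by
    intro w
    rw [hFdef]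
    simp only [hTc]
    exact key _ (NormedSpace.isUnit_exp_of_mem_ball (𝕂 := ℂ) ((NormedSpace.expSeries_radius_eq_top ℂ B).symm ▸ edist_lt_top _ _)) b
  have hconst : ∀ w : ℂ, F w = F 0 := by
    intro w
    apply hdiff.apply_eq_apply_of_bounded
    apply isBounded_iff_forall_norm_le.mpr
    exact ⟨‖b‖ * ‖(1:B)‖, by rintro x ⟨w', rfl⟩; exact hbdd w'⟩
  -- derivative of F at 0
  have he0 : HasDerivAt (fun w : ℂ => NormedSpace.exp (w • a)) a 0 := by
    have := hasDerivAt_exp_smul_const' a (0:ℂ)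
    rwa [zero_smul, NormedSpace.exp_zero, mul_one] at this
  have hg0 : HasDerivAt (fun w : ℂ => Tc (NormedSpace.exp (w • a))) (Tc a) 0 :=
    Tc.hasFDerivAt.comp_hasDerivAt 0 he0
  have hval0 : Tc (NormedSpace.exp ((0:ℂ) • a)) = 1 := by
    rw [zero_smul, NormedSpace.exp_zero, hTc, hT1]
  have hr0 : HasDerivAt (fun w : ℂ => Ring.inverse (Tc (NormedSpace.exp (w • a))))
      (-(Tc a)) 0 := by
    have h1 : HasFDerivAt Ring.inverse
        (-((ContinuousLinearMap.mulLeftRight ℂ A) ((1 : Aˣ)⁻¹ : Aˣ) ((1 : Aˣ)⁻¹ : Aˣ)))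
        ((1 : Aˣ) : A) := hasFDerivAt_ringInverse (1 : Aˣ)
    have h1' : HasFDerivAt Ring.inverse
        (-((ContinuousLinearMap.mulLeftRight ℂ A) ((1 : Aˣ)⁻¹ : Aˣ) ((1 : Aˣ)⁻¹ : Aˣ)))
        (Tc (NormedSpace.exp ((0:ℂ) • a))) := by
      rw [hval0]; simpa using h1
    have := h1'.comp_hasDerivAt 0 hg0
    simpa [Function.comp_def] using this
  have hh0 : HasDerivAt (fun w : ℂ => Tc (NormedSpace.exp (w • a) * b)) (Tc (a * b)) 0 :=
    Tc.hasFDerivAt.comp_hasDerivAt 0 (he0.mul_const b)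
  have hprod : HasDerivAt (fun w : ℂ =>
      Ring.inverse (Tc (NormedSpace.exp (w • a))) * Tc (NormedSpace.exp (w • a) * b))
      (-(Tc a) * Tc b + Tc (a * b)) 0 := by
    have := hr0.mul hh0
    simp only [hval0, Ring.inverse_one, one_mul] at this
    have hvb : Tc (NormedSpace.exp ((0:ℂ) • a) * b) = Tc b := by
      rw [zero_smul, NormedSpace.exp_zero, one_mul]
    rw [hvb] at this
    exact this
  have hτC := LinearMap.mkContinuous τ 1 (fun z => by
    rw [one_mul]; simpa using τbdd z)
  have hF0 : HasDerivAt F (τ (-(Tc a) * Tc b + Tc (a * b))) 0 := by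
    have := (LinearMap.mkContinuous τ 1 (fun z => by
      rw [one_mul]; simpa using τbdd z)).hasFDerivAt.comp_hasDerivAt 0 hprod
    exact this
  have hFc : HasDerivAt F 0 0 := by
    have hFeq : F = fun _ => F 0 := funext hconst
    rw [hFeq]
    exact hasDerivAt_const 0 (F 0)
  have hzero : τ (-(Tc a) * Tc b + Tc (a * b)) = 0 := hF0.unique hFc
  have harg : -(Tc a) * Tc b + Tc (a * b) = T (a * b) - T a * T b := by
    rw [hTc, hTc, hTc, neg_mul]
    abel
  rw [harg] at hzero
  exact hzero
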